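/- The M-set M itself (acting on itself by left multiplication) is not mild: a surjective injection u ∈ M (i.e., a bijection of ω) is not supported on any co-infinite subset of ω. -/
import Mathlib


/-- The monoid of injective self-maps of ω (modelled as ℕ), under composition. -/
def M : Submonoid (Function.End ℕ) where
  carrier := {f | Function.Injective f}
  mul_mem' := fun hf hg => hf.comp hg
  one_mem' := fun _ _ h => h

/-- `x` is supported on `A` if it is fixed by every injection fixing `A` pointwise. -/
def Supported {X : Type*} [MulAction M X] (A : Set ℕ) (x : X) : Prop :=
  ∀ u : M, (∀ a ∈ A, u.1 a = a) → u • x = x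

theorem stmt_8 (u : M) (hu : Function.Surjective u.1)
    (A : Set ℕ) (hA : (Aᶜ : Set ℕ).Infinite) :
    ¬ Supported A u := by
  intro h
  obtain ⟨a, ha, b, hb, hab⟩ := hA.nontrivial
  set f : M := ⟨⇑(Equiv.swap a b), (Equiv.swap a b).injective⟩ with hf
  have hfix : ∀ x ∈ A, f.1 x = x := by
    intro x hx
    exact Equiv.swap_apply_of_ne_of_ne (fun e => ha (e ▸ hx)) (fun e => hb (e ▸ hx))
  have heq := h f hfix
  obtain ⟨x, hx⟩ := hu a
  have hval := congrArg Subtype.val heq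
  rw [smul_eq_mul, Submonoid.coe_mul] at hval
  have key : f.1 a = a := by
    calc f.1 a = f.1 (u.1 x) := by rw [hx]
      _ = (f.1 * u.1) x := rfl
      _ = u.1 x := by rw [hval]
      _ = a := hx
  have : Equiv.swap a b a = a := key
  rw [Equiv.swap_apply_left] at this
  exact hab this.symm
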